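/- Let i range over a finite index set, and let Z_i, e_i, W_i ∈ ℝ. (a) If ∑_i (Z_i − e_i) W_i = 0, then ∑_i W_i Z_i (1 − e_i) = ∑_i W_i (1 − Z_i) e_i. (b) If ∑_i (Z_i − e_i) = 0, then ∑_i Z_i (1 − e_i) = ∑_i (1 − Z_i) e_i. (c) Consequently, if both ∑_i (Z_i − e_i) = 0 and ∑_i (Z_i − e_i) W_i = 0 hold and ∑_i Z_i(1 − e_i) ≠ 0, then the overlap-weighted means are exactly balanced: [∑_i W_i Z_i (1−e_i)] / [∑_i Z_i (1−e_i)] = [∑_i W_i (1−Z_i) e_i] / [∑_i (1−Z_i) e_i]. -/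

import Mathlib

open Finset

/-- Algebraic identities behind the exact balance property of overlap weights:
(a) if `∑ (Z i − e i) * W i = 0` then the overlap-weighted sums of `W` in the
two arms agree; (b) if `∑ (Z i − e i) = 0` then the total overlap weights of the
two arms agree; (c) consequently the overlap-weighted means of `W` are exactly
balanced whenever the denominators are nonzero. -/
theorem overlap_exact_balance_algebra
    {ι : Type*} (s : Finset ι) (Z e W : ι → ℝ) :
    ((∑ i ∈ s, (Z i - e i) * W i = 0) →
        ∑ i ∈ s, W i * Z i * (1 - e i) = ∑ i ∈ s, W i * (1 - Z i) * e i) ∧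
    ((∑ i ∈ s, (Z i - e i) = 0) →
        ∑ i ∈ s, Z i * (1 - e i) = ∑ i ∈ s, (1 - Z i) * e i) ∧
    ((∑ i ∈ s, (Z i - e i) = 0) → (∑ i ∈ s, (Z i - e i) * W i = 0) →
      (∑ i ∈ s, Z i * (1 - e i) ≠ 0) →
        (∑ i ∈ s, W i * Z i * (1 - e i)) / (∑ i ∈ s, Z i * (1 - e i)) =
          (∑ i ∈ s, W i * (1 - Z i) * e i) / (∑ i ∈ s, (1 - Z i) * e i)) := by
  have ha : ∀ h : (∑ i ∈ s, (Z i - e i) * W i = 0),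
      ∑ i ∈ s, W i * Z i * (1 - e i) = ∑ i ∈ s, W i * (1 - Z i) * e i := by
    intro h
    have : ∑ i ∈ s, W i * Z i * (1 - e i) - ∑ i ∈ s, W i * (1 - Z i) * e i = 0 := by
      rw [← Finset.sum_sub_distrib, ← h]
      exact Finset.sum_congr rfl fun i _ => by ring
    linarith
  have hb : ∀ h : (∑ i ∈ s, (Z i - e i) = 0),
      ∑ i ∈ s, Z i * (1 - e i) = ∑ i ∈ s, (1 - Z i) * e i := by
    intro h
    have : ∑ i ∈ s, Z i * (1 - e i) - ∑ i ∈ s, (1 - Z i) * e i = 0 := by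
      rw [← Finset.sum_sub_distrib, ← h]
      exact Finset.sum_congr rfl fun i _ => by ring
    linarith
  refine ⟨ha, hb, fun h1 h2 hne => ?_⟩
  rw [ha h2, hb h1]
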